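/- For every positive integer m and every positive integer i, both (i+1)√(4m+1)/(2i+1) and (2i+1)m/(i√(4m+1)) belong to W_{m+2}(√(4m+1)). -/

import Mathlib

open scoped BigOperators

/-- `W r α` : the smallest set of nonneg reals containing `α` and closed under the
multiset rule from the paper. -/
inductive W (r : ℕ) (α : ℝ) : ℝ → Prop
  | base : W r α α
  | step (s : ℕ) (q : Fin s → ℝ) (β : ℝ)
      (hq : ∀ i, W r α (q i)) (hqpos : ∀ i, 0 < q i)
      (hβeq : β = α - ∑ i, (q i)⁻¹) (hβ0 : 0 ≤ β)
      (hs1 : 1 ≤ s) (hs : (s : ℤ) ≤ (r : ℤ) - ⌈β / (β + 1)⌉) : W r α β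

private lemma ceil_le_one_aux {β : ℝ} (hβ0 : 0 ≤ β) : ⌈β / (β + 1)⌉ ≤ 1 := by
  apply Int.ceil_le.mpr
  push_cast
  rw [div_le_one (by linarith)]
  linarith

private lemma W.stepOne (r s : ℕ) (α x β : ℝ) (hx : W r α x)
    (hxpos : 0 < x) (hβ : β = α - s * x⁻¹) (hβ0 : 0 ≤ β)
    (hs1 : 1 ≤ s) (hs : s + 1 ≤ r) : W r α β := by
  refine W.step s (fun _ => x) β (fun _ => hx) (fun _ => hxpos) ?_ hβ0 hs1 ?_
  · simp [Finset.sum_const, hβ, mul_comm]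
  · have h1 := ceil_le_one_aux hβ0
    have h2 : (s : ℤ) + 1 ≤ r := by exact_mod_cast hs
    omega

private lemma W.stepTwo (r s : ℕ) (α x y β : ℝ) (hx : W r α x) (hy : W r α y)
    (hxpos : 0 < x) (hypos : 0 < y)
    (hβ : β = α - (s * x⁻¹ + y⁻¹)) (hβ0 : 0 ≤ β)
    (hs : s + 2 ≤ r) : W r α β := by
  refine W.step (s + 1) (fun j => if (j : ℕ) < s then x else y) β ?_ ?_ ?_ hβ0 (by omega) ?_
  · intro j; split
    · exact hx
    · exact hy
  · intro j; split
    · exact hxpos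
    · exact hypos
  · rw [hβ, Fin.sum_univ_castSucc]
    simp [Fin.is_lt, mul_comm]
  · have h1 := ceil_le_one_aux hβ0
    have h2 : (s : ℤ) + 2 ≤ r := by exact_mod_cast hs
    omega

theorem stmt_12 (m i : ℕ) (hm : 0 < m) (hi : 0 < i) :
    W (m + 2) (Real.sqrt (4 * m + 1))
        (((i : ℝ) + 1) * Real.sqrt (4 * m + 1) / (2 * i + 1)) ∧
      W (m + 2) (Real.sqrt (4 * m + 1))
        ((2 * (i : ℝ) + 1) * m / (i * Real.sqrt (4 * m + 1))) := by
  set α := Real.sqrt (4 * m + 1) with hαdef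
  have hαpos : 0 < α := Real.sqrt_pos.mpr (by positivity)
  have hα2 : α ^ 2 = 4 * m + 1 := Real.sq_sqrt (by positivity)
  have hm' : (0 : ℝ) < m := by exact_mod_cast hm
  -- from b_j in W, get a_j in W
  have key : ∀ j : ℕ, 0 < j → W (m + 2) α ((2 * (j : ℝ) + 1) * m / (j * α)) →
      W (m + 2) α (((j : ℝ) + 1) * α / (2 * j + 1)) := by
    intro j hj hb
    have hj' : (0 : ℝ) < j := by exact_mod_cast hj
    refine W.stepOne (m + 2) m α _ _ hb (by positivity) ?_ (by positivity) hm (by omega)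
    field_simp
    ring
  induction i, hi using Nat.le_induction with
  | base =>
      have hb : W (m + 2) α ((2 * ((1 : ℕ) : ℝ) + 1) * m / (((1 : ℕ) : ℝ) * α)) := by
        refine W.stepOne (m + 2) (m + 1) α α _ W.base hαpos ?_ (by positivity)
          (by omega) (by omega)
        push_cast
        field_simp
        linear_combination (-(1:ℝ) - α + α) * hα2
      exact ⟨key 1 one_pos hb, hb⟩
  | succ i hi ih =>
      obtain ⟨ha, hb⟩ := ih
      have hi' : (0 : ℝ) < i := by exact_mod_cast hi
      have hb' : W (m + 2) α ((2 * ((i + 1 : ℕ) : ℝ) + 1) * m / ((i + 1 : ℕ) * α)) := by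
        refine W.stepTwo (m + 2) m α _ α _ ha W.base (by positivity) hαpos ?_
          (by positivity) (by omega)
        push_cast
        field_simp
        linear_combination (-((i:ℝ)+1)) * hα2
      push_cast at hb' ⊢
      exact ⟨by have := key (i + 1) (by omega) (by push_cast; exact hb'); push_cast at this; exact this, hb'⟩
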